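/- Let H be a Hopf algebra over a field k and for φ ∈ H* (the linear dual) define the left coregular representation R*_φ : H → H by R*_φ = (id ⊗ φ) ∘ Δ. Let W be the fundamental operator W(g ⊗ h) = Σ g₍₁₎ ⊗ g₍₂₎h with inverse W⁻¹(g ⊗ h) = Σ g₍₁₎ ⊗ (Sg₍₂₎)h. Then for every φ ∈ H*, W⁻¹ ∘ (id ⊗ R*_φ) ∘ W = Σ R*_{φ₍₁₎} ⊗ R*_{φ₍₂₎}, where Δφ is the convolution comultiplication determined by ⟨Δφ, h ⊗ g⟩ = ⟨φ, hg⟩. -/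

import Mathlib

open TensorProduct Coalgebra LinearMap

variable (k H : Type*) [Field k] [Ring H] [HopfAlgebra k H]

/-- The fundamental operator `W(g ⊗ h) = Σ g₍₁₎ ⊗ g₍₂₎h`. -/
noncomputable def fundW : H ⊗[k] H →ₗ[k] H ⊗[k] H :=
  (LinearMap.lTensor H (LinearMap.mul' k H)) ∘ₗ
    (TensorProduct.assoc k H H H).toLinearMap ∘ₗ
      (LinearMap.rTensor H (Coalgebra.comul (R := k)))

/-- The inverse operator `W⁻¹(g ⊗ h) = Σ g₍₁₎ ⊗ (S g₍₂₎)h`. -/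
noncomputable def fundW' : H ⊗[k] H →ₗ[k] H ⊗[k] H :=
  (LinearMap.lTensor H
      ((LinearMap.mul' k H) ∘ₗ
        LinearMap.rTensor H (HopfAlgebra.antipode (R := k) (A := H)))) ∘ₗ
    (TensorProduct.assoc k H H H).toLinearMap ∘ₗ
      (LinearMap.rTensor H (Coalgebra.comul (R := k)))

/-- The left coregular representation `R*_φ = (id ⊗ φ) ∘ Δ`. -/
noncomputable def coreg (φ : H →ₗ[k] k) : H →ₗ[k] H :=
  (TensorProduct.rid k H).toLinearMap ∘ₗ (LinearMap.lTensor H φ) ∘ₗ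
    (Coalgebra.comul (R := k))

/-- The operator `Σ R*_{φ₍₁₎} ⊗ R*_{φ₍₂₎}` on `H ⊗ H`, where `Δφ` is the convolution
comultiplication determined by `⟨Δφ, h ⊗ g⟩ = ⟨φ, hg⟩`: on `g ⊗ g'` it gives
`Σ g₍₁₎ ⊗ g'₍₁₎ ⟨φ, g₍₂₎ g'₍₂₎⟩`. -/
noncomputable def coregComul (φ : H →ₗ[k] k) : H ⊗[k] H →ₗ[k] H ⊗[k] H :=
  (TensorProduct.rid k (H ⊗[k] H)).toLinearMap ∘ₗ
    (LinearMap.lTensor (H ⊗[k] H) (φ ∘ₗ LinearMap.mul' k H)) ∘ₗ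
      (TensorProduct.tensorTensorTensorComm k H H H H).toLinearMap ∘ₗ
        (TensorProduct.map (Coalgebra.comul (R := k)) (Coalgebra.comul (R := k)))

open HopfAlgebra
set_option maxHeartbeats 800000
set_option synthInstance.maxHeartbeats 200000

noncomputable def Mmap (φ : H →ₗ[k] k) (h : H) : H ⊗[k] H →ₗ[k] H :=
  (TensorProduct.rid k H).toLinearMap ∘ₗ (LinearMap.lTensor H φ) ∘ₗ
    LinearMap.mulRight k (Coalgebra.comul (R := k) h)

lemma fundW_tmul (g h : H) (r : Repr k g (H × H)) :
    fundW k H (g ⊗ₜ[k] h) = ∑ i ∈ r.index, r.left i ⊗ₜ[k] (r.right i * h) := by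
  simp only [fundW, comp_apply, LinearEquiv.coe_coe, rTensor_tmul, id_coe, id_eq]
  rw [← r.eq]
  simp [sum_tmul, map_sum]

lemma fundW'_tmul (g h : H) (r : Repr k g (H × H)) :
    fundW' k H (g ⊗ₜ[k] h) =
      ∑ i ∈ r.index, r.left i ⊗ₜ[k] (antipode (R := k) (r.right i) * h) := by
  simp only [fundW', comp_apply, LinearEquiv.coe_coe, rTensor_tmul, id_coe, id_eq]
  rw [← r.eq]
  simp [sum_tmul, map_sum]

lemma coreg_apply (φ : H →ₗ[k] k) (x : H) (r : Repr k x (H × H)) :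
    coreg k H φ x = ∑ i ∈ r.index, φ (r.right i) • r.left i := by
  simp only [coreg, comp_apply, LinearEquiv.coe_coe]
  rw [← r.eq]
  simp [map_sum]

lemma coregComul_tmul (φ : H →ₗ[k] k) (g h : H) (rg : Repr k g (H × H)) (rh : Repr k h (H × H)) :
    coregComul k H φ (g ⊗ₜ[k] h) =
      ∑ i ∈ rg.index, ∑ j ∈ rh.index,
        φ (rg.right i * rh.right j) • (rg.left i ⊗ₜ[k] rh.left j) := by
  simp only [coregComul, comp_apply, LinearEquiv.coe_coe, map_tmul]
  rw [← rg.eq, ← rh.eq]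
  simp [sum_tmul, tmul_sum, map_sum]
  rw [Finset.sum_comm]

lemma Mmap_tmul (φ : H →ₗ[k] k) (h : H) (rh : Repr k h (H × H)) (y z : H) :
    Mmap k H φ h (y ⊗ₜ[k] z) =
      ∑ j ∈ rh.index, φ (z * rh.right j) • (y * rh.left j) := by
  simp only [Mmap, comp_apply, LinearEquiv.coe_coe, mulRight_apply]
  rw [← rh.eq, Finset.mul_sum]
  simp [Algebra.TensorProduct.tmul_mul_tmul, map_sum]

lemma coreg_mul (φ : H →ₗ[k] k) (h x : H) :
    coreg k H φ (x * h) = Mmap k H φ h (Coalgebra.comul (R := k) x) := by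
  simp only [coreg, Mmap, comp_apply, LinearEquiv.coe_coe, mulRight_apply,
    Bialgebra.comul_mul]

lemma sum_counit_smul (x : H) (r : Repr k x (H × H)) :
    ∑ i ∈ r.index, Coalgebra.counit (R := k) (r.left i) • r.right i = x := by
  have h0 := congrArg (TensorProduct.lid k H) (sum_counit_tmul_eq (R := k) r)
  simp only [map_sum, lid_tmul, lid_symm_apply] at h0
  simpa using h0

lemma key (φ : H →ₗ[k] k) (h x : H) (r : Repr k x (H × H)) :
    ∑ m ∈ r.index,
        antipode (R := k) (r.left m) * Mmap k H φ h (Coalgebra.comul (R := k) (r.right m)) =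
      Mmap k H φ h (1 ⊗ₜ[k] x) := by
  classical
  set rh := ℛ k h with hrh
  set rc := fun m => ℛ k (r.left m) with hrc
  -- step: ∑ m, left m ⊗ Δ (right m) = ∑ m ∑ p, (rc m).left p ⊗ ((rc m).right p ⊗ right m)
  have step : ∑ m ∈ r.index, r.left m ⊗ₜ[k] (Coalgebra.comul (R := k) (r.right m)) =
      ∑ m ∈ r.index, ∑ p ∈ (rc m).index,
        (rc m).left p ⊗ₜ[k] ((rc m).right p ⊗ₜ[k] r.right m) := by
    have h1 : (∑ m ∈ r.index, r.left m ⊗ₜ[k] (Coalgebra.comul (R := k) (r.right m))) =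
        (Coalgebra.comul (R := k)).lTensor H (Coalgebra.comul (R := k) x) := by
      rw [← r.eq, map_sum]; simp
    rw [h1, ← Coalgebra.coassoc_apply, ← r.eq, map_sum, map_sum]
    refine Finset.sum_congr rfl fun m _ => ?_
    rw [rTensor_tmul, ← (rc m).eq, sum_tmul, map_sum]
    simp
  have V := congrArg
    ((LinearMap.mul' k H ∘ₗ TensorProduct.map (antipode (R := k) (A := H)) (Mmap k H φ h))) step
  simp only [map_sum, comp_apply, map_tmul, mul'_apply] at V
  rw [V]
  -- now collapse: ∑ m ∑ p, S((rc m).left p) * Mmap ((rc m).right p ⊗ r.right m)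
  have inner : ∀ m ∈ r.index, ∑ p ∈ (rc m).index,
      antipode (R := k) ((rc m).left p) * Mmap k H φ h ((rc m).right p ⊗ₜ[k] r.right m) =
      ∑ j ∈ rh.index, (Coalgebra.counit (R := k) (r.left m) * φ (r.right m * rh.right j)) •
        rh.left j := by
    intro m _
    calc ∑ p ∈ (rc m).index,
        antipode (R := k) ((rc m).left p) * Mmap k H φ h ((rc m).right p ⊗ₜ[k] r.right m)
        = ∑ p ∈ (rc m).index, ∑ j ∈ rh.index, φ (r.right m * rh.right j) •
            (antipode (R := k) ((rc m).left p) * (rc m).right p * rh.left j) := by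
          refine Finset.sum_congr rfl fun p _ => ?_
          rw [Mmap_tmul k H φ h rh, Finset.mul_sum]
          refine Finset.sum_congr rfl fun j _ => ?_
          rw [mul_smul_comm, mul_assoc]
      _ = ∑ j ∈ rh.index, φ (r.right m * rh.right j) •
            ((∑ p ∈ (rc m).index,
              antipode (R := k) ((rc m).left p) * (rc m).right p) * rh.left j) := by
          rw [Finset.sum_comm]
          refine Finset.sum_congr rfl fun j _ => ?_
          rw [Finset.sum_mul, Finset.smul_sum]
      _ = ∑ j ∈ rh.index, (Coalgebra.counit (R := k) (r.left m) * φ (r.right m * rh.right j)) •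
            rh.left j := by
          refine Finset.sum_congr rfl fun j _ => ?_
          rw [sum_antipode_mul_eq_algebraMap_counit (rc m), ← Algebra.smul_def, mul_comm, mul_smul]
  rw [Finset.sum_congr rfl inner, Finset.sum_comm, Mmap_tmul k H φ h rh]
  refine Finset.sum_congr rfl fun j _ => ?_
  rw [one_mul, ← Finset.sum_smul]
  congr 1
  have e2 : ∑ m ∈ r.index, Coalgebra.counit (R := k) (r.left m) * φ (r.right m * rh.right j)
      = φ ((∑ m ∈ r.index, Coalgebra.counit (R := k) (r.left m) • r.right m) * rh.right j) := by
    rw [Finset.sum_mul, map_sum]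
    exact Finset.sum_congr rfl fun m _ => by rw [smul_mul_assoc, map_smul, smul_eq_mul]
  rw [e2, sum_counit_smul]

/-- `W⁻¹ ∘ (id ⊗ R*_φ) ∘ W = Σ R*_{φ₍₁₎} ⊗ R*_{φ₍₂₎}` for every `φ ∈ H*`. -/
theorem fundW_coreg_conjugation (φ : H →ₗ[k] k) :
    fundW' k H ∘ₗ (LinearMap.lTensor H (coreg k H φ)) ∘ₗ fundW k H =
      coregComul k H φ := by
  classical
  apply TensorProduct.ext'
  intro g h
  set rg := ℛ k g with hrg
  set rh := ℛ k h with hrh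
  set r1 := fun i => ℛ k (rg.left i) with hr1
  set r2 := fun i => ℛ k (rg.right i) with hr2
  rw [comp_apply, comp_apply, fundW_tmul k H g h rg, map_sum, map_sum]
  simp only [lTensor_tmul]
  have lhs1 : ∀ i ∈ rg.index,
      fundW' k H (rg.left i ⊗ₜ[k] coreg k H φ (rg.right i * h)) =
      ∑ n ∈ (r1 i).index, (r1 i).left n ⊗ₜ[k]
        (antipode (R := k) ((r1 i).right n) *
          Mmap k H φ h (Coalgebra.comul (R := k) (rg.right i))) := by
    intro i _
    rw [coreg_mul, fundW'_tmul k H _ _ (r1 i)]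
  rw [Finset.sum_congr rfl lhs1]
  -- use coassociativity (sum_tmul_tmul_eq) mapped through T''
  have star := sum_tmul_tmul_eq (R := k) rg r1 r2
  have V := congrArg (LinearMap.lTensor H
    (LinearMap.mul' k H ∘ₗ TensorProduct.map (antipode (R := k) (A := H))
      (Mmap k H φ h ∘ₗ (Coalgebra.comul (R := k))))) star
  simp only [map_sum, lTensor_tmul, comp_apply, map_tmul, mul'_apply] at V
  rw [V]
  -- collapse the inner sum with `key`
  have lhs2 : ∀ i ∈ rg.index,
      (∑ m ∈ (r2 i).index, rg.left i ⊗ₜ[k]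
        (antipode (R := k) ((r2 i).left m) *
          Mmap k H φ h (Coalgebra.comul (R := k) ((r2 i).right m)))) =
      rg.left i ⊗ₜ[k] Mmap k H φ h (1 ⊗ₜ[k] rg.right i) := by
    intro i _
    rw [← tmul_sum, key k H φ h (rg.right i) (r2 i)]
  rw [Finset.sum_congr rfl lhs2]
  -- right hand side
  rw [coregComul_tmul k H φ g h rg rh]
  refine Finset.sum_congr rfl fun i _ => ?_
  rw [Mmap_tmul k H φ h rh, tmul_sum]
  exact Finset.sum_congr rfl fun j _ => by rw [one_mul, tmul_smul]
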